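/- Let ‖·‖ be a norm on M_n(ℂ) and ‖·‖_* its dual norm with respect to the pairing ⟨Y|X⟩ = Tr(Y*X). Then the unit ball of ‖·‖_* is C*-convex if and only if ‖·‖ is an L-norm. -/

import Mathlib

open Matrix BigOperators ComplexOrder

/-- Square complex matrices. -/
abbrev Mat (n : ℕ) := Matrix (Fin n) (Fin n) ℂ

/-- `N` is a norm on `Mat n`. -/
def IsMatrixNorm {n : ℕ} (N : Mat n → ℝ) : Prop :=
  (∀ A, N A = 0 ↔ A = 0) ∧
  (∀ (c : ℂ) (A : Mat n), N (c • A) = ‖c‖ * N A) ∧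
  (∀ A B : Mat n, N (A + B) ≤ N A + N B)

/-- A set of matrices is C*-convex. -/
def CStarConvex {n : ℕ} (K : Set (Mat n)) : Prop :=
  ∀ (k : ℕ) (C A : Fin k → Mat n), (∀ i, A i ∈ K) →
    (∑ i, (C i)ᴴ * C i = 1) → (∑ i, (C i)ᴴ * A i * C i) ∈ K

/-- `N` is an M-norm. -/
def IsMNorm {n : ℕ} (N : Mat n → ℝ) : Prop :=
  ∀ (k : ℕ) (C X : Fin k → Mat n), (∑ i, (C i)ᴴ * C i = 1) →
    N (∑ i, (C i)ᴴ * X i * C i) ≤ ⨆ i, N (X i)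

/-- `N` is an L-norm. -/
def IsLNorm {n : ℕ} (N : Mat n → ℝ) : Prop :=
  ∀ (k : ℕ) (C : Fin k → Mat n) (X : Mat n), (∑ i, (C i)ᴴ * C i = 1) →
    ∑ i, N (C i * X * (C i)ᴴ) ≤ N X

/-- The dual norm with respect to the pairing `⟨Y|X⟩ = Tr(Yᴴ X)`. -/
noncomputable def dualNorm {n : ℕ} (N : Mat n → ℝ) (Y : Mat n) : ℝ :=
  sSup {r | ∃ X : Mat n, N X ≤ 1 ∧ r = ‖(Yᴴ * X).trace‖}

/-- The operator (spectral) norm of a matrix. -/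
noncomputable def opNorm {n : ℕ} (A : Mat n) : ℝ :=
  ‖Matrix.toEuclideanCLM (𝕜 := ℂ) (n := Fin n) A‖

/-- The trace norm `‖A‖₁ = Tr((AᴴA)^{1/2})`. -/
noncomputable def traceNorm {n : ℕ} (A : Mat n) : ℝ :=
  (((Matrix.posSemidef_conjTranspose_mul_self A).1.eigenvectorUnitary : Mat n) *
    diagonal (((↑) : ℝ → ℂ) ∘ Real.sqrt ∘ (Matrix.posSemidef_conjTranspose_mul_self A).1.eigenvalues) *
    (star (Matrix.posSemidef_conjTranspose_mul_self A).1.eigenvectorUnitary : Mat n)).trace.re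

/-- The numerical radius. -/
noncomputable def numRadius {n : ℕ} (A : Mat n) : ℝ :=
  sSup {r | ∃ x : EuclideanSpace ℂ (Fin n), ‖x‖ = 1 ∧
    r = ‖(inner ℂ x (Matrix.toEuclideanCLM (𝕜 := ℂ) (n := Fin n) A x))‖}

namespace AuxLNorm

/-- Type synonym for `Mat n` avoiding the global matrix topology instances. -/
def Esyn (n : ℕ) : Type := Mat n

noncomputable instance {n : ℕ} : AddCommGroup (Esyn n) :=
  inferInstanceAs (AddCommGroup (Mat n))
noncomputable instance {n : ℕ} : Module ℂ (Esyn n) := inferInstanceAs (Module ℂ (Mat n))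
instance {n : ℕ} : FiniteDimensional ℂ (Esyn n) :=
  inferInstanceAs (Module.Finite ℂ (Mat n))

/-- Identity as a linear equivalence `Mat n ≃ₗ[ℂ] Esyn n`. -/
noncomputable def eqv (n : ℕ) : Mat n ≃ₗ[ℂ] Esyn n where
  toFun X := X
  invFun X := X
  map_add' _ _ := rfl
  map_smul' _ _ := rfl
  left_inv _ := rfl
  right_inv _ := rfl

variable {n : ℕ} {N : Mat n → ℝ}

noncomputable def theGroupNorm (N : Mat n → ℝ) (hN : IsMatrixNorm N) :
    AddGroupNorm (Esyn n) where
  toFun X := N ((eqv n).symm X)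
  map_zero' := by simpa using (hN.1 0).2 rfl
  add_le' A B := by simpa using hN.2.2 ((eqv n).symm A) ((eqv n).symm B)
  neg' A := by
    have h := hN.2.1 (-1) ((eqv n).symm A)
    simp only [map_neg]
    simpa using h
  eq_zero_of_map_eq_zero' A h := by
    have := (hN.1 _).1 h
    simpa using congrArg (eqv n) (this : (eqv n).symm A = 0)

/-- The pairing `X ↦ Tr(Yᴴ X)` as a linear map on the synonym. -/
noncomputable def pairL (n : ℕ) (Y : Mat n) : Esyn n →ₗ[ℂ] ℂ where
  toFun X := (Yᴴ * ((eqv n).symm X)).trace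
  map_add' X Z := by simp [Matrix.mul_add]
  map_smul' c X := by simp [Matrix.mul_smul]

lemma N_nonneg (hN : IsMatrixNorm N) (X : Mat n) : 0 ≤ N X := by
  have h1 := hN.2.2 X (-X)
  have h2 : N (-X) = N X := by have := hN.2.1 (-1) X; simpa using this
  have h0 : N 0 = 0 := (hN.1 0).2 rfl
  rw [add_neg_cancel, h0, h2] at h1
  linarith

lemma dualSet_bddAbove (hN : IsMatrixNorm N) (Y : Mat n) :
    BddAbove {r | ∃ X : Mat n, N X ≤ 1 ∧ r = ‖((Yᴴ * X).trace)‖} := by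
  letI : NormedAddCommGroup (Esyn n) := (theGroupNorm N hN).toNormedAddCommGroup
  letI : NormedSpace ℂ (Esyn n) := ⟨fun c x => le_of_eq (by
    show N ((eqv n).symm (c • x)) = ‖c‖ * N ((eqv n).symm x)
    rw [_root_.map_smul, hN.2.1])⟩
  let f := LinearMap.toContinuousLinearMap (pairL n Y)
  refine ⟨‖f‖, fun r hr => ?_⟩
  obtain ⟨X, hX, rfl⟩ := hr
  have h1 : ‖((Yᴴ * X).trace)‖ = ‖f (eqv n X)‖ := by
    rfl
  have h2 : ‖eqv n X‖ = N X := rfl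
  rw [h1]
  calc ‖f (eqv n X)‖ ≤ ‖f‖ * ‖eqv n X‖ := f.le_opNorm _
    _ ≤ ‖f‖ * 1 := by rw [h2]; exact mul_le_mul_of_nonneg_left hX (norm_nonneg f)
    _ = ‖f‖ := mul_one _

lemma dualNorm_nonneg (hN : IsMatrixNorm N) (Y : Mat n) : 0 ≤ dualNorm N Y := by
  refine le_csSup (dualSet_bddAbove hN Y) ⟨0, ?_, by simp⟩
  rw [(hN.1 0).2 rfl]; exact zero_le_one

lemma pairing_abs_le (hN : IsMatrixNorm N) (Y X : Mat n) :
    ‖((Yᴴ * X).trace)‖ ≤ dualNorm N Y * N X := by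
  rcases eq_or_ne (N X) 0 with h0 | h0
  · have hX : X = 0 := (hN.1 X).1 h0
    rw [hX, (hN.1 0).2 rfl]
    simp
  · have hpos : 0 < N X := lt_of_le_of_ne (N_nonneg hN X) (Ne.symm h0)
    set X' : Mat n := ((N X : ℂ)⁻¹) • X with hX'
    have hNX' : N X' = 1 := by
      rw [hX', hN.2.1, norm_inv, Complex.norm_real, Real.norm_of_nonneg hpos.le]
      field_simp
    have hle : ‖((Yᴴ * X').trace)‖ ≤ dualNorm N Y :=
      le_csSup (dualSet_bddAbove hN Y) ⟨X', le_of_eq hNX', rfl⟩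
    have htr : ‖((Yᴴ * X').trace)‖
        = (N X)⁻¹ * ‖((Yᴴ * X).trace)‖ := by
      rw [hX', Matrix.mul_smul, Matrix.trace_smul, smul_eq_mul, norm_mul,
        norm_inv, Complex.norm_real, Real.norm_of_nonneg hpos.le]
    rw [htr] at hle
    calc ‖((Yᴴ * X).trace)‖
        = N X * ((N X)⁻¹ * ‖((Yᴴ * X).trace)‖) := by field_simp
      _ ≤ N X * dualNorm N Y := mul_le_mul_of_nonneg_left hle (le_of_lt hpos)
      _ = dualNorm N Y * N X := mul_comm _ _

lemma exists_dual (hN : IsMatrixNorm N) (Z : Mat n) :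
    ∃ Y : Mat n, dualNorm N Y ≤ 1 ∧ (Yᴴ * Z).trace = (N Z : ℂ) := by
  rcases eq_or_ne Z 0 with rfl | hZ
  · refine ⟨0, ?_, by simp [(hN.1 0).2 rfl]⟩
    refine Real.sSup_le (fun r hr => ?_) zero_le_one
    obtain ⟨X, _, rfl⟩ := hr
    simp
  · letI : NormedAddCommGroup (Esyn n) := (theGroupNorm N hN).toNormedAddCommGroup
    letI : NormedSpace ℂ (Esyn n) := ⟨fun c x => le_of_eq (by
      show N ((eqv n).symm (c • x)) = ‖c‖ * N ((eqv n).symm x)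
      rw [_root_.map_smul, hN.2.1])⟩
    have hZ' : eqv n Z ≠ 0 := by
      intro h
      exact hZ (by simpa using congrArg (eqv n).symm h)
    obtain ⟨g, hg1, hgZ⟩ := exists_dual_vector ℂ (eqv n Z) (norm_ne_zero_iff.mpr hZ')
    set G : Mat n →ₗ[ℂ] ℂ := g.toLinearMap.comp (eqv n).toLinearMap with hG
    set Y : Mat n := Matrix.of (fun i j => (starRingEnd ℂ) (G (Matrix.single i j 1)))
      with hY
    have key : ∀ X : Mat n, (Yᴴ * X).trace = G X := by
      intro X
      have hX : X = ∑ i : Fin n, ∑ j : Fin n, Matrix.single i j (X i j) :=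
        matrix_eq_sum_single X
      conv_rhs => rw [hX]
      rw [map_sum]
      simp only [map_sum]
      rw [Matrix.trace]
      simp only [Matrix.diag, Matrix.mul_apply, Matrix.conjTranspose_apply]
      rw [Finset.sum_comm]
      refine Finset.sum_congr rfl (fun i _ => Finset.sum_congr rfl (fun j _ => ?_))
      have hsb : Matrix.single i j (X i j) = (X i j) • Matrix.single i j 1 := by
        rw [smul_single, smul_eq_mul, mul_one]
      rw [hsb, LinearMap.map_smul, smul_eq_mul]
      simp [hY, mul_comm]
    have hnormE : ∀ W : Mat n, ‖eqv n W‖ = N W := by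
      intro W
      show N ((eqv n).symm (eqv n W)) = N W
      rw [LinearEquiv.symm_apply_apply]
    refine ⟨Y, ?_, ?_⟩
    · refine Real.sSup_le (fun r hr => ?_) zero_le_one
      obtain ⟨X, hX, rfl⟩ := hr
      rw [key X]
      have : G X = g (eqv n X) := rfl
      rw [this]
      calc ‖g (eqv n X)‖ = ‖g (eqv n X)‖ := rfl
        _ ≤ ‖g‖ * ‖eqv n X‖ := g.le_opNorm _
        _ = N X := by rw [hg1, one_mul, hnormE]
        _ ≤ 1 := hX
    · rw [key Z]
      show g (eqv n Z) = (N Z : ℂ)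
      rw [hgZ, hnormE]
      rfl

end AuxLNorm

open AuxLNorm

theorem dual_unitBall_cstarConvex_iff_LNorm {n : ℕ} (N : Mat n → ℝ)
    (hN : IsMatrixNorm N) :
    CStarConvex {Y : Mat n | dualNorm N Y ≤ 1} ↔ IsLNorm N := by
  constructor
  · intro hK k C X hC
    -- choose optimal dual vectors for each Cᵢ X Cᵢᴴ
    choose Y hY1 hY2 using fun i => exists_dual hN (C i * X * (C i)ᴴ)
    have hW : dualNorm N (∑ i, (C i)ᴴ * Y i * C i) ≤ 1 := hK k C Y hY1 hC
    set W : Mat n := ∑ i, (C i)ᴴ * Y i * C i with hWdef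
    have htr : (Wᴴ * X).trace = ∑ i, ((Y i)ᴴ * (C i * X * (C i)ᴴ)).trace := by
      rw [hWdef, Matrix.conjTranspose_sum, Finset.sum_mul, Matrix.trace_sum]
      refine Finset.sum_congr rfl (fun i _ => ?_)
      rw [Matrix.conjTranspose_mul, Matrix.conjTranspose_mul,
        Matrix.conjTranspose_conjTranspose]
      simp only [Matrix.mul_assoc]
      rw [Matrix.trace_mul_comm]
      simp [Matrix.mul_assoc]
    have hsum : ((∑ i, N (C i * X * (C i)ᴴ) : ℝ) : ℂ) = (Wᴴ * X).trace := by
      rw [htr]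
      push_cast
      exact Finset.sum_congr rfl (fun i _ => (hY2 i).symm)
    have habs : ∑ i, N (C i * X * (C i)ᴴ) = ‖((Wᴴ * X).trace)‖ := by
      rw [← hsum, Complex.norm_real,
        Real.norm_of_nonneg (Finset.sum_nonneg fun i _ => N_nonneg hN _)]
    rw [habs]
    calc ‖((Wᴴ * X).trace)‖ ≤ dualNorm N W * N X := pairing_abs_le hN W X
      _ ≤ 1 * N X := mul_le_mul_of_nonneg_right hW (N_nonneg hN X)
      _ = N X := one_mul _
  · intro hL k C A hA hC
    refine Real.sSup_le (fun r hr => ?_) zero_le_one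
    obtain ⟨X, hX, rfl⟩ := hr
    set W : Mat n := ∑ i, (C i)ᴴ * A i * C i with hWdef
    have htr : (Wᴴ * X).trace = ∑ i, ((A i)ᴴ * (C i * X * (C i)ᴴ)).trace := by
      rw [hWdef, Matrix.conjTranspose_sum, Finset.sum_mul, Matrix.trace_sum]
      refine Finset.sum_congr rfl (fun i _ => ?_)
      rw [Matrix.conjTranspose_mul, Matrix.conjTranspose_mul,
        Matrix.conjTranspose_conjTranspose]
      simp only [Matrix.mul_assoc]
      rw [Matrix.trace_mul_comm]
      simp [Matrix.mul_assoc]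
    calc ‖((Wᴴ * X).trace)‖
        ≤ ∑ i, ‖(((A i)ᴴ * (C i * X * (C i)ᴴ)).trace)‖ := by
          rw [htr]; exact norm_sum_le _ _
      _ ≤ ∑ i, N (C i * X * (C i)ᴴ) := by
          refine Finset.sum_le_sum (fun i _ => ?_)
          calc ‖(((A i)ᴴ * (C i * X * (C i)ᴴ)).trace)‖
              ≤ dualNorm N (A i) * N (C i * X * (C i)ᴴ) := pairing_abs_le hN _ _
            _ ≤ 1 * N (C i * X * (C i)ᴴ) :=
                mul_le_mul_of_nonneg_right (hA i) (N_nonneg hN _)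
            _ = N (C i * X * (C i)ᴴ) := one_mul _
      _ ≤ N X := hL k C X hC
      _ ≤ 1 := hX
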